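/- arXiv:2211.13715 — 2 statements merged into one kernel-verified Lean document; each statement's English description precedes it below -/
import Mathlib

section
/- Two-sample score-function gradient identity for the MLE-based GIT objective (Equation (12) of Appendix A.2). Let S be a finite type, k : S, β : S → ℝ with 0 < β k < 1, and A : (S → Bool) → (S → Bool) → ℝ. Define F : ℝ → ℝ by F(t) = ∑_{c' : S → Bool} ∑_{c : S → Bool} w_{Function.update β k t}(c') · w_{Function.update β k t}(c) · A(c', c). Then F has derivative at the point t = β k equal to ∑_{c' : S → Bool} ∑_{c : S → Bool} w_β(c') · w_β(c) · ((b(c',k) + b(c,k) − 2 · β k) / (β k · (1 − β k))) · A(c', c) (in the sense of HasDerivAt). -/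
/-- Bernoulli product weight of a configuration `c` with edge probabilities `β`. -/
noncomputable def bernoulliWeight {S : Type*} [Fintype S] (β : S → ℝ) (c : S → Bool) : ℝ :=
  ∏ s : S, if c s then β s else 1 - β s

/-- Indicator `b(c,k)` of the edge `k` in configuration `c`, as a real number. -/
noncomputable def edgeIndicator {S : Type*} (c : S → Bool) (k : S) : ℝ :=
  if c k then 1 else 0

lemma bw_split {S : Type*} [Fintype S] [DecidableEq S] (k : S) (β : S → ℝ) (c : S → Bool) :
    bernoulliWeight β c = (if c k then β k else 1 - β k) *
      ∏ s ∈ Finset.univ.erase k, (if c s then β s else 1 - β s) := by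
  rw [bernoulliWeight, ← Finset.mul_prod_erase Finset.univ _ (Finset.mem_univ k)]

lemma bw_deriv {S : Type*} [Fintype S] [DecidableEq S] (k : S) (β : S → ℝ)
    (hβ0 : 0 < β k) (hβ1 : β k < 1) (c : S → Bool) :
    HasDerivAt (fun t : ℝ => bernoulliWeight (Function.update β k t) c)
      (bernoulliWeight β c * ((edgeIndicator c k - β k) / (β k * (1 - β k)))) (β k) := by
  set P := ∏ s ∈ Finset.univ.erase k, (if c s then β s else 1 - β s) with hP
  have hfun : ∀ t : ℝ, bernoulliWeight (Function.update β k t) c =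
      (if c k then t else 1 - t) * P := by
    intro t
    rw [bw_split k (Function.update β k t) c, Function.update_self]
    congr 1
    apply Finset.prod_congr rfl
    intro s hs
    rw [Function.update_of_ne (Finset.ne_of_mem_erase hs)]
  have hd : HasDerivAt (fun t : ℝ => (if c k then t else 1 - t) * P)
      ((if c k then (1:ℝ) else -1) * P) (β k) := by
    apply HasDerivAt.mul_const
    by_cases h : c k <;> simp only [h, if_true, if_false]
    · exact hasDerivAt_id _
    · simpa using (hasDerivAt_id (β k)).const_sub 1
  have heq : (if c k then (1:ℝ) else -1) * P =
      bernoulliWeight β c * ((edgeIndicator c k - β k) / (β k * (1 - β k))) := by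
    rw [bw_split k β c, edgeIndicator]
    have ha : β k ≠ 0 := hβ0.ne'
    have hb : (1:ℝ) - β k ≠ 0 := by linarith
    by_cases h : c k <;> simp only [h, if_true, if_false, Bool.false_eq_true] <;>
      · field_simp
        ring
  rw [heq] at hd
  exact hd.congr_of_eventuallyEq (Filter.Eventually.of_forall hfun)

/-- Two-sample score-function gradient identity for the MLE-based GIT objective
(Equation (12) of Appendix A.2). -/
theorem reinforce_gradient_two_sample
    {S : Type*} [Fintype S] [DecidableEq S] (k : S) (β : S → ℝ)
    (hβ0 : 0 < β k) (hβ1 : β k < 1) (A : (S → Bool) → (S → Bool) → ℝ) :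
    HasDerivAt
      (fun t : ℝ => ∑ c' : S → Bool, ∑ c : S → Bool,
        bernoulliWeight (Function.update β k t) c' *
          bernoulliWeight (Function.update β k t) c * A c' c)
      (∑ c' : S → Bool, ∑ c : S → Bool,
        bernoulliWeight β c' * bernoulliWeight β c *
          ((edgeIndicator c' k + edgeIndicator c k - 2 * β k) / (β k * (1 - β k))) *
          A c' c)
      (β k) := by
  apply HasDerivAt.fun_sum
  intro c' _
  apply HasDerivAt.fun_sum
  intro c _
  have h1 := bw_deriv k β hβ0 hβ1 c'
  have h2 := bw_deriv k β hβ0 hβ1 c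
  have := (h1.fun_mul h2).mul_const (A c' c)
  simp only [Function.update_eq_self] at this
  convert this using 1
  case e'_4 => rfl
  ring
end

section
/- ENCO gradient formula for the edge-existence parameter γ (Equation (8) of Appendix C.1): the derivative of the regularized expected graph-fitting loss with respect to γ_{ij} equals σ'(γ_{ij})·σ(θ_{ij})·E_{C_{−ij}}[L_{X_i→X_j} − L_{X_i↛X_j} + λ]. Precisely: let S be a finite type with a distinguished element e : S, let p : S → ℝ, θ λ γ : ℝ, and L : (S → Bool) → ℝ. Define F : ℝ → ℝ by F(g) = ∑_{c : S → Bool} (∏_{s : S} if s = e then (if c s then σ(g)·σ(θ) else 1 − σ(g)·σ(θ)) else (if c s then p s else 1 − p s)) · L(c) + λ · σ(g) · σ(θ). Then F has derivative at g = γ equal to σ(γ)·(1 − σ(γ))·σ(θ) · ( ∑_{c : S → Bool, c e = false} (∏_{s ≠ e} if c s then p s else 1 − p s) · (L(Function.update c e true) − L(Function.update c e false)) + λ ) (in the sense of HasDerivAt). -/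
/-- The logistic sigmoid `σ(x) = (1 + exp(-x))⁻¹`. -/
noncomputable def logisticSigmoid (x : ℝ) : ℝ := (1 + Real.exp (-x))⁻¹

lemma hasDerivAt_logisticSigmoid (x : ℝ) :
    HasDerivAt logisticSigmoid (logisticSigmoid x * (1 - logisticSigmoid x)) x := by
  have h1 : HasDerivAt (fun y : ℝ => 1 + Real.exp (-y)) (-Real.exp (-x)) x := by
    simpa using ((Real.hasDerivAt_exp (-x)).comp x (hasDerivAt_neg x)).const_add 1
  have hne : 1 + Real.exp (-x) ≠ 0 := by positivity
  have := h1.inv hne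
  convert this using 1
  · rfl
  · rfl
  · rfl
  unfold logisticSigmoid
  field_simp
  ring

/-- ENCO gradient formula for the edge-existence parameter `γ`
(Equation (8) of Appendix C.1). -/
theorem enco_gamma_gradient
    {S : Type*} [Fintype S] [DecidableEq S] (e : S) (p : S → ℝ)
    (θ lam γ : ℝ) (L : (S → Bool) → ℝ) :
    HasDerivAt
      (fun g : ℝ =>
        (∑ c : S → Bool,
          (∏ s : S,
            if s = e then
              (if c s then logisticSigmoid g * logisticSigmoid θ
               else 1 - logisticSigmoid g * logisticSigmoid θ)
            else (if c s then p s else 1 - p s)) * L c)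
          + lam * logisticSigmoid g * logisticSigmoid θ)
      (logisticSigmoid γ * (1 - logisticSigmoid γ) * logisticSigmoid θ *
        ((∑ c ∈ Finset.univ.filter (fun c : S → Bool => c e = false),
            (∏ s ∈ Finset.univ.erase e, if c s then p s else 1 - p s) *
              (L (Function.update c e true) - L (Function.update c e false)))
          + lam))
      γ := by
  classical
  set σ := logisticSigmoid with hσ
  set Q : (S → Bool) → ℝ := fun c => ∏ s ∈ Finset.univ.erase e, if c s then p s else 1 - p s
    with hQ
  have hQupd : ∀ (c : S → Bool) (b : Bool), Q (Function.update c e b) = Q c := by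
    intro c b
    apply Finset.prod_congr rfl
    intro s hs
    rw [Function.update_of_ne (Finset.ne_of_mem_erase hs)]
  -- product decomposition
  have hprod : ∀ (g : ℝ) (c : S → Bool),
      (∏ s : S, if s = e then (if c s then σ g * σ θ else 1 - σ g * σ θ)
        else (if c s then p s else 1 - p s))
      = (if c e then σ g * σ θ else 1 - σ g * σ θ) * Q c := by
    intro g c
    rw [← Finset.mul_prod_erase Finset.univ _ (Finset.mem_univ e)]
    rw [if_pos rfl]
    congr 1
    apply Finset.prod_congr rfl
    intro s hs
    rw [if_neg (Finset.ne_of_mem_erase hs)]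
  set T : ℝ := ∑ c ∈ Finset.univ.filter (fun c : S → Bool => c e = true), Q c * L c with hT
  set Fo : ℝ := ∑ c ∈ Finset.univ.filter (fun c : S → Bool => c e = false), Q c * L c with hFo
  have hsplit : ∀ g : ℝ,
      (∑ c : S → Bool,
        (∏ s : S, if s = e then (if c s then σ g * σ θ else 1 - σ g * σ θ)
          else (if c s then p s else 1 - p s)) * L c)
      = σ g * σ θ * T + (1 - σ g * σ θ) * Fo := by
    intro g
    simp only [hprod]
    rw [← Finset.sum_filter_add_sum_filter_not Finset.univ (fun c : S → Bool => c e = true)]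
    rw [hT, hFo, Finset.mul_sum, Finset.mul_sum]
    congr 1
    · apply Finset.sum_congr rfl
      intro c hc
      simp only [Finset.mem_filter] at hc
      rw [if_pos hc.2]; ring
    · rw [show (Finset.univ.filter fun c : S → Bool => ¬c e = true)
          = Finset.univ.filter (fun c : S → Bool => c e = false) by
          apply Finset.filter_congr; intro c _; simp]
      apply Finset.sum_congr rfl
      intro c hc
      simp only [Finset.mem_filter] at hc
      rw [if_neg (by simp [hc.2])]; ring
  -- reindex T
  have hTval : T = ∑ c ∈ Finset.univ.filter (fun c : S → Bool => c e = false),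
      Q c * L (Function.update c e true) := by
    rw [hT]
    apply Finset.sum_nbij' (fun c => Function.update c e false)
      (fun c => Function.update c e true)
    · intro c hc; simp
    · intro c hc; simp
    · intro c hc
      simp only [Finset.mem_filter] at hc
      rw [Function.update_idem, ← hc.2]
      exact Function.update_eq_self e c
    · intro c hc
      simp only [Finset.mem_filter] at hc
      rw [Function.update_idem, ← hc.2]
      exact Function.update_eq_self e c
    · intro c hc
      simp only [Finset.mem_filter] at hc
      rw [hQupd, Function.update_idem, ← hc.2, Function.update_eq_self]
  have hFoval : Fo = ∑ c ∈ Finset.univ.filter (fun c : S → Bool => c e = false),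
      Q c * L (Function.update c e false) := by
    rw [hFo]
    apply Finset.sum_congr rfl
    intro c hc
    simp only [Finset.mem_filter] at hc
    rw [← hc.2, Function.update_eq_self]
  have hdiff : T - Fo = ∑ c ∈ Finset.univ.filter (fun c : S → Bool => c e = false),
      Q c * (L (Function.update c e true) - L (Function.update c e false)) := by
    rw [hTval, hFoval, ← Finset.sum_sub_distrib]
    apply Finset.sum_congr rfl
    intro c _
    ring
  -- final function rewrite
  have hfun : ∀ g : ℝ,
      ((∑ c : S → Bool,
        (∏ s : S, if s = e then (if c s then σ g * σ θ else 1 - σ g * σ θ)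
          else (if c s then p s else 1 - p s)) * L c)
        + lam * σ g * σ θ)
      = σ g * (σ θ * (T - Fo + lam)) + Fo := by
    intro g
    rw [hsplit g]; ring
  have hD : HasDerivAt (fun g : ℝ => σ g * (σ θ * (T - Fo + lam)) + Fo)
      (σ γ * (1 - σ γ) * (σ θ * (T - Fo + lam))) γ :=
    ((hasDerivAt_logisticSigmoid γ).mul_const _).add_const _
  have := hD.congr_of_eventuallyEq (Filter.Eventually.of_forall fun g => (hfun g))
  convert this using 1
  · rfl
  · rfl
  rw [hdiff]
  ring
end
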